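/- Let D be even, and for x ∈ V_D written uniquely as x = e_{[a_1,b_1]} + ... + e_{[a_r,b_r]} with 1 ≤ a_1 ≤ b_1, b_s + 2 ≤ a_{s+1}, b_r ≤ D, define u(x) = Σ_{s : a_s ≢ b_s (mod 2)} (−1)^{a_s}. Then for D ≥ 2 and any i ∈ [1,D], c ∈ 𝔽_2, and v' ∈ V_{D-2}, one has u(T_i(v') + c·e_i) = u(v') — i.e., u is invariant under the maps v' ↦ T_i(v') + c e_i. -/

import Mathlib

open Finset

abbrev Vec := ℕ →₀ ZMod 2

/-- The basis vector `e_i`. -/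
noncomputable def e (i : ℕ) : Vec := Finsupp.single i 1

/-- For an interval `p = (a,b)` (representing `[a,b]`), the vector `e_I = ∑_{i∈[a,b]} e_i`. -/
noncomputable def eI (p : ℕ × ℕ) : Vec := ∑ j ∈ Finset.Icc p.1 p.2, e j

/-- The map `ξ_i` on intervals. -/
def tint (i : ℕ) (p : ℕ × ℕ) : ℕ × ℕ :=
  if i ≤ p.1 then (p.1 + 2, p.2 + 2)
  else if p.2 + 2 ≤ i then p
  else (p.1, p.2 + 2)

/-- The map `t_i` on sets of intervals: `t_i(B') = ξ_i(B') ∪ {[i,i]}`. -/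
def tmap (i : ℕ) (B : Finset (ℕ × ℕ)) : Finset (ℕ × ℕ) :=
  B.image (tint i) ∪ {(i, i)}

/-- The inductively defined family `S_D`. -/
inductive IsS : ℕ → Finset (ℕ × ℕ) → Prop
  | empty (D : ℕ) : IsS D ∅
  | one : IsS 1 {(1, 1)}
  | step (D i : ℕ) (B' : Finset (ℕ × ℕ)) (h1 : 1 ≤ i) (h2 : i ≤ D + 2)
      (h : IsS D B') : IsS (D + 2) (tmap i B')

def primEven (D k : ℕ) : Finset (ℕ × ℕ) := (Finset.Icc 1 k).image fun j => (j, D + 1 - j)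
def primOddA (D k : ℕ) : Finset (ℕ × ℕ) := (Finset.Icc 1 k).image fun j => (j, D - j)
def primOddB (D k : ℕ) : Finset (ℕ × ℕ) := (Finset.Icc 1 k).image fun j => (j + 1, D + 1 - j)

/-- The primitive elements of `𝕊_D`. -/
def IsPrim (D : ℕ) (B : Finset (ℕ × ℕ)) : Prop :=
  B = ∅ ∨
  (Even D ∧ ∃ k, 1 ≤ k ∧ k ≤ D / 2 ∧ B = primEven D k) ∨
  (Odd D ∧ ∃ k, Odd k ∧ 1 ≤ k ∧ k ≤ (D - 1) / 2 ∧ (B = primOddA D k ∨ B = primOddB D k))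

/-- The inductively defined family `𝕊_D`. -/
inductive IsSS : ℕ → Finset (ℕ × ℕ) → Prop
  | prim (D : ℕ) (B : Finset (ℕ × ℕ)) : IsPrim D B → IsSS D B
  | one : IsSS 1 {(1, 1)}
  | step (D i : ℕ) (B' : Finset (ℕ × ℕ)) (h1 : 1 ≤ i) (h2 : i ≤ D + 2)
      (h : IsSS D B') : IsSS (D + 2) (tmap i B')

/-- The subspace `𝔼_B` spanned by the `e_I`, `I ∈ B`. -/
noncomputable def EB (B : Finset (ℕ × ℕ)) : Submodule (ZMod 2) Vec :=
  Submodule.span (ZMod 2) (eI '' (B : Set (ℕ × ℕ)))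

/-- Two intervals are non-touching. -/
def Nontouch (p q : ℕ × ℕ) : Prop := p.2 + 2 ≤ q.1 ∨ q.2 + 2 ≤ p.1

/-- `p ≺ q`: `p = [a,b]` is strictly nested inside `q = [a',b']`, i.e. `a' < a ≤ b < b'`. -/
def Nested (p q : ℕ × ℕ) : Prop := q.1 < p.1 ∧ p.1 ≤ p.2 ∧ p.2 < q.2

/-- `η_D = e_1 + e_3 + ⋯ + e_D` (`D` odd). -/
noncomputable def eta (D : ℕ) : Vec := ∑ j ∈ (Finset.Icc 1 D).filter (fun j => j % 2 = 1), e j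

noncomputable def Tfun (i k : ℕ) : Vec :=
  if k + 1 < i then e k
  else if k + 1 = i then e k + e (k + 1) + e (k + 2)
  else e (k + 2)

/-- The linear map `T_i : V_{D-2} → V_D`. -/
noncomputable def Tlin (i : ℕ) : Vec →ₗ[ZMod 2] Vec :=
  Finsupp.linearCombination (ZMod 2) (Tfun i)

/-- The inductively defined family `𝒻(V_D)` of subspaces. -/
inductive IsF : ℕ → Submodule (ZMod 2) Vec → Prop
  | zero (D : ℕ) : IsF D ⊥
  | one : IsF 1 (Submodule.span (ZMod 2) {e 1})
  | step (D i : ℕ) (E' : Submodule (ZMod 2) Vec) (h1 : 1 ≤ i) (h2 : i ≤ D + 2)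
      (h : IsF D E') :
      IsF (D + 2) (Submodule.map (Tlin i) E' ⊔ Submodule.span (ZMod 2) {e i})

/-- The subspace `V_D = ⟨e_1,…,e_D⟩`. -/
noncomputable def VD (D : ℕ) : Submodule (ZMod 2) Vec :=
  Submodule.span (ZMod 2) (e '' Set.Icc 1 D)

/-- The symplectic form with `(e_i,e_j) = 1` iff `|i-j| = 1`. -/
noncomputable def symp (x y : Vec) : ZMod 2 :=
  x.sum fun i xi => xi * (y (i + 1) + if 1 ≤ i then y (i - 1) else 0)


/-- The left endpoints of the maximal runs of a finite set of positive integers. -/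
def leftEnds (s : Finset ℕ) : Finset ℕ := s.filter fun i => i - 1 ∉ s

/-- The right endpoints of the maximal runs. -/
def rightEnds (s : Finset ℕ) : Finset ℕ := s.filter fun i => i + 1 ∉ s

/-- The right endpoint of the run of `s` starting at `a`. -/
def blockEnd (s : Finset ℕ) (a : ℕ) : ℕ :=
  WithTop.untopD 0 (((rightEnds s).filter fun j => a ≤ j).min)

/-- The invariant `u(x) = Σ_{s : a_s ≢ b_s mod 2} (−1)^{a_s}` over the maximal blocks
`[a_s,b_s]` of the support of `x`. -/
noncomputable def uInv (x : Vec) : ℤ :=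
  ∑ a ∈ leftEnds x.support,
    if (a + blockEnd x.support a) % 2 = 1 then (-1 : ℤ) ^ a else 0

lemma neg_one_pow_congr' {a b : ℕ} (h : a % 2 = b % 2) : (-1:ℤ)^a = (-1:ℤ)^b := by
  rw [← Nat.div_add_mod a 2, ← Nat.div_add_mod b 2, pow_add, pow_add, pow_mul, pow_mul]
  norm_num [h]

lemma mem_leftEnds {s : Finset ℕ} {a : ℕ} : a ∈ leftEnds s ↔ a ∈ s ∧ a - 1 ∉ s := Finset.mem_filter
lemma mem_rightEnds {s : Finset ℕ} {a : ℕ} : a ∈ rightEnds s ↔ a ∈ s ∧ a + 1 ∉ s := Finset.mem_filter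

lemma blockEnd_eq {s : Finset ℕ} {a b : ℕ} (hb : b ∈ rightEnds s) (hab : a ≤ b)
    (hmin : ∀ r ∈ rightEnds s, a ≤ r → b ≤ r) : blockEnd s a = b := by
  have hbt : b ∈ (rightEnds s).filter (fun j => a ≤ j) := mem_filter.2 ⟨hb, hab⟩
  have hne : ((rightEnds s).filter (fun j => a ≤ j)).Nonempty := ⟨b, hbt⟩
  have h1 : ((rightEnds s).filter (fun j => a ≤ j)).min' hne = b := by
    refine le_antisymm (min'_le _ _ hbt) (le_min' _ _ _ ?_)
    intro y hy
    exact hmin y (mem_filter.1 hy).1 (mem_filter.1 hy).2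
  unfold blockEnd
  rw [← coe_min' hne, h1, WithTop.untopD_coe]

lemma exR {s : Finset ℕ} {a b : ℕ} (ha : a ∈ s) (hb : b ∉ s) (hab : a < b) :
    ∃ r ∈ rightEnds s, a ≤ r ∧ r < b := by
  have hne : (s.filter (fun x => a ≤ x ∧ x < b)).Nonempty := ⟨a, mem_filter.2 ⟨ha, le_refl a, hab⟩⟩
  set r := (s.filter (fun x => a ≤ x ∧ x < b)).max' hne with hr
  obtain ⟨hrs, har, hrb⟩ := mem_filter.1 ((s.filter (fun x => a ≤ x ∧ x < b)).max'_mem hne)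
  refine ⟨r, mem_rightEnds.2 ⟨hrs, fun hr1 => ?_⟩, har, hrb⟩
  have h1 : r + 1 ≠ b := fun h => hb (h ▸ hr1)
  have h2 : r + 1 ∈ s.filter (fun x => a ≤ x ∧ x < b) := mem_filter.2 ⟨hr1, by omega, by omega⟩
  have := le_max' _ _ h2
  omega

lemma exL {s : Finset ℕ} {b c : ℕ} (hb : b ∉ s) (hc : c ∈ s) (hbc : b < c) :
    ∃ l ∈ leftEnds s, b < l ∧ l ≤ c := by
  have hne : (s.filter (fun x => b < x ∧ x ≤ c)).Nonempty := ⟨c, mem_filter.2 ⟨hc, hbc, le_refl c⟩⟩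
  set l := (s.filter (fun x => b < x ∧ x ≤ c)).min' hne with hl
  obtain ⟨hls, hbl, hlc⟩ := mem_filter.1 ((s.filter (fun x => b < x ∧ x ≤ c)).min'_mem hne)
  refine ⟨l, mem_leftEnds.2 ⟨hls, fun hl1 => ?_⟩, hbl, hlc⟩
  have h1 : l - 1 ≠ b := fun h => hb (h ▸ hl1)
  have h2 : l - 1 ∈ s.filter (fun x => b < x ∧ x ≤ c) := mem_filter.2 ⟨hl1, by omega, by omega⟩
  have := min'_le _ _ h2
  omega

lemma blockEnd_erase {s : Finset ℕ} (hs : s.Nonempty) {a : ℕ}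
    (hwit : ∃ r ∈ rightEnds (s.erase (s.max' hs)), a ≤ r ∧ r + 1 < s.max' hs) :
    blockEnd s a = blockEnd (s.erase (s.max' hs)) a := by
  set m := s.max' hs with hm
  obtain ⟨r, hr, har, hrm⟩ := hwit
  set s' := s.erase m with hs'
  have hrt : r ∈ (rightEnds s').filter (fun j => a ≤ j) := mem_filter.2 ⟨hr, har⟩
  have hne : ((rightEnds s').filter (fun j => a ≤ j)).Nonempty := ⟨r, hrt⟩
  set b := ((rightEnds s').filter (fun j => a ≤ j)).min' hne with hb
  have hbt : b ∈ (rightEnds s').filter (fun j => a ≤ j) := min'_mem _ hne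
  obtain ⟨hbr', hab⟩ := mem_filter.1 hbt
  have hble : b ≤ r := min'_le _ _ hrt
  obtain ⟨hbs', hb1⟩ := mem_rightEnds.1 hbr'
  have hbs : b ∈ s := mem_of_mem_erase hbs'
  have hbm : b + 1 ≠ m := by omega
  have hb1s : b + 1 ∉ s := fun h => hb1 (mem_erase.2 ⟨hbm, h⟩)
  have hbr : b ∈ rightEnds s := mem_rightEnds.2 ⟨hbs, hb1s⟩
  have e1 : blockEnd s a = b := by
    refine blockEnd_eq hbr hab (fun r' hr' har' => ?_)
    rcases eq_or_ne r' m with rfl | hne'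
    · omega
    · have hrr : r' ∈ rightEnds s' := mem_rightEnds.2 ⟨mem_erase.2 ⟨hne', (mem_rightEnds.1 hr').1⟩,
        fun h => (mem_rightEnds.1 hr').2 (mem_of_mem_erase h)⟩
      exact min'_le _ _ (mem_filter.2 ⟨hrr, har'⟩)
  have e2 : blockEnd s' a = b :=
    blockEnd_eq hbr' hab (fun r' hr' har' => min'_le _ _ (mem_filter.2 ⟨hr', har'⟩))
  rw [e1, e2]

lemma lemA : ∀ (s : Finset ℕ), 0 ∉ s →
    ((∑ a ∈ leftEnds s, if (a + blockEnd s a) % 2 = 1 then (-1:ℤ)^a else 0)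
      = ∑ j ∈ s.filter (fun j => j + 1 ∈ s), (-1:ℤ)^j) := by
  intro s
  induction s using Finset.strongInduction with
  | _ s ih =>
  intro h0
  rcases s.eq_empty_or_nonempty with rfl | hs
  · simp [leftEnds]
  set m := s.max' hs with hm
  have hm_mem : m ∈ s := s.max'_mem hs
  have hmle : ∀ j ∈ s, j ≤ m := fun j hj => s.le_max' j hj
  have hm1 : 1 ≤ m := by
    rcases Nat.eq_zero_or_pos m with h | h
    · exact absurd (h ▸ hm_mem) h0
    · exact h
  have hmp1 : m + 1 ∉ s := fun h => by have := hmle _ h; omega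
  have hmr : m ∈ rightEnds s := mem_rightEnds.2 ⟨hm_mem, hmp1⟩
  set s' := s.erase m with hs'
  have hsub : s' ⊂ s := Finset.erase_ssubset hm_mem
  have h0' : 0 ∉ s' := fun h => h0 (Finset.mem_of_mem_erase h)
  have IH := ih s' hsub h0'
  have hs'iff : ∀ j, j ∈ s' ↔ j ∈ s ∧ j ≠ m := fun j => by rw [Finset.mem_erase]; tauto
  by_cases hprev : m - 1 ∈ s
  · -- subcase A : the top block has length ≥ 2
    have hm2 : 2 ≤ m := by
      rcases Nat.lt_or_ge m 2 with h | h
      · interval_cases m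
        · exact absurd hprev h0
      · exact h
    have hmnotL : m ∉ leftEnds s := fun h => (mem_leftEnds.1 h).2 hprev
    have hL : leftEnds s' = leftEnds s := by
      ext j
      simp only [mem_leftEnds, hs'iff]
      constructor
      · rintro ⟨⟨hj, hjm⟩, hj1⟩
        refine ⟨hj, fun h => hj1 ⟨h, ?_⟩⟩
        have := hmle j hj
        omega
      · rintro ⟨hj, hj1⟩
        refine ⟨⟨hj, fun h => hj1 (by rw [h]; exact hprev)⟩, fun h => hj1 h.1⟩
    have hLne : (leftEnds s).Nonempty := by
      refine ⟨s.min' hs, mem_leftEnds.2 ⟨s.min'_mem hs, fun h => ?_⟩⟩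
      have h1 := s.min'_le _ h
      have h2 : s.min' hs ≠ 0 := fun h' => h0 (h' ▸ s.min'_mem hs)
      omega
    set A := (leftEnds s).max' hLne with hA
    have hA_mem : A ∈ leftEnds s := (leftEnds s).max'_mem hLne
    have hA_max : ∀ l ∈ leftEnds s, l ≤ A := fun l hl => (leftEnds s).le_max' l hl
    obtain ⟨hAs, hA1⟩ := mem_leftEnds.1 hA_mem
    have hAm : A ≠ m := fun h => hmnotL (h ▸ hA_mem)
    have hAltm : A < m := lt_of_le_of_ne (hmle _ hAs) hAm
    have key1 : blockEnd s A = m := by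
      refine blockEnd_eq hmr (by omega) (fun r hr har => ?_)
      by_contra hlt
      obtain ⟨hrs, hr1⟩ := mem_rightEnds.1 hr
      have hr1m : r + 1 ≠ m := fun h => hr1 (h ▸ hm_mem)
      have : r + 1 < m := by
        have := hmle r hrs
        omega
      obtain ⟨l, hl, hl1, hl2⟩ := exL hr1 hm_mem this
      have := hA_max l hl
      omega
    have hm1r : m - 1 ∈ rightEnds s' := by
      refine mem_rightEnds.2 ⟨(hs'iff _).2 ⟨hprev, by omega⟩, fun h => ?_⟩
      have := ((hs'iff _).1 h).2
      omega
    have key2 : blockEnd s' A = m - 1 := by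
      refine blockEnd_eq hm1r (by omega) (fun r hr har => ?_)
      by_contra hlt
      obtain ⟨hrs', hr1'⟩ := mem_rightEnds.1 hr
      obtain ⟨hrs, hrm⟩ := (hs'iff _).1 hrs'
      have hr1 : r + 1 ∉ s := fun h => hr1' ((hs'iff _).2 ⟨h, by omega⟩)
      obtain ⟨l, hl, hl1, hl2⟩ := exL hr1 hm_mem (by omega)
      have := hA_max l hl
      omega
    have keyCongr : ∀ a ∈ leftEnds s, a ≠ A → blockEnd s a = blockEnd s' a := by
      intro a ha hne
      obtain ⟨has, ha1⟩ := mem_leftEnds.1 ha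
      have haA : a < A := lt_of_le_of_ne (hA_max a ha) hne
      have haA1 : a < A - 1 := by
        rcases Nat.lt_or_ge a (A - 1) with h | h
        · exact h
        · have : a = A - 1 := by omega
          exact absurd (this ▸ has) hA1
      obtain ⟨r, hr, har, hrA⟩ := exR has hA1 haA1
      obtain ⟨hrs, hr1⟩ := mem_rightEnds.1 hr
      refine blockEnd_erase hs ⟨r, mem_rightEnds.2 ⟨(hs'iff _).2 ⟨hrs, by omega⟩,
        fun h => hr1 ((hs'iff _).1 h).1⟩, har, by omega⟩
    -- sums
    have eU : (∑ a ∈ leftEnds s, if (a + blockEnd s a) % 2 = 1 then (-1:ℤ)^a else 0)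
        = (-1:ℤ)^(m-1) + ∑ a ∈ leftEnds s', if (a + blockEnd s' a) % 2 = 1 then (-1:ℤ)^a else 0 := by
      rw [hL]
      rw [← Finset.add_sum_erase _ _ hA_mem, ← Finset.add_sum_erase _ (fun a => if (a + blockEnd s' a) % 2 = 1 then (-1:ℤ)^a else 0) hA_mem]
      have hrest : ∑ a ∈ (leftEnds s).erase A, (if (a + blockEnd s a) % 2 = 1 then (-1:ℤ)^a else 0)
          = ∑ a ∈ (leftEnds s).erase A, (if (a + blockEnd s' a) % 2 = 1 then (-1:ℤ)^a else 0) := by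
        refine Finset.sum_congr rfl (fun a ha => ?_)
        rw [keyCongr a (mem_of_mem_erase ha) (ne_of_mem_erase ha)]
      rw [hrest, key1, key2, ← add_assoc]
      congr 1
      by_cases hpar : (A + m) % 2 = 1
      · rw [if_pos hpar, if_neg (by omega)]
        rw [add_zero]
        exact neg_one_pow_congr' (by omega)
      · rw [if_neg hpar, if_pos (by omega)]
        have h1 : (-1:ℤ)^(m-1) = (-1:ℤ)^(A+1) := neg_one_pow_congr' (by omega)
        rw [h1, pow_succ]
        ring
    have eP : (∑ j ∈ s.filter (fun j => j + 1 ∈ s), (-1:ℤ)^j)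
        = (-1:ℤ)^(m-1) + ∑ j ∈ s'.filter (fun j => j + 1 ∈ s'), (-1:ℤ)^j := by
      have hmem : m - 1 ∈ s.filter (fun j => j + 1 ∈ s) := by
        refine mem_filter.2 ⟨hprev, ?_⟩
        have : m - 1 + 1 = m := by omega
        rw [this]; exact hm_mem
      have hpairs' : s'.filter (fun j => j + 1 ∈ s') = (s.filter (fun j => j + 1 ∈ s)).erase (m-1) := by
        ext j
        simp only [mem_filter, mem_erase, hs'iff]
        constructor
        · rintro ⟨⟨hj, hjm⟩, hj1, hj1m⟩
          exact ⟨by omega, hj, hj1⟩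
        · rintro ⟨hjm1, hj, hj1⟩
          have := hmle _ hj1
          exact ⟨⟨hj, by omega⟩, hj1, by omega⟩
      rw [hpairs', ← Finset.add_sum_erase _ _ hmem]
    rw [eU, IH, ← eP]
  · -- subcase B : the top block is a singleton {m}
    have hpairs : s.filter (fun j => j + 1 ∈ s) = s'.filter (fun j => j + 1 ∈ s') := by
      ext j
      simp only [mem_filter, hs'iff]
      constructor
      · rintro ⟨hj, hj1⟩
        have hjm : j ≠ m := fun h => hmp1 (h ▸ hj1)
        have hj1m : j + 1 ≠ m := fun h => hprev (by rwa [show m - 1 = j by omega])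
        exact ⟨⟨hj, hjm⟩, hj1, hj1m⟩
      · rintro ⟨⟨hj, _⟩, hj1, _⟩
        exact ⟨hj, hj1⟩
    have hmL : m ∈ leftEnds s := mem_leftEnds.2 ⟨hm_mem, hprev⟩
    have hL : leftEnds s' = (leftEnds s).erase m := by
      ext j
      simp only [mem_leftEnds, mem_erase, hs'iff]
      constructor
      · rintro ⟨⟨hj, hjm⟩, hj1⟩
        refine ⟨hjm, hj, fun h => hj1 ⟨h, ?_⟩⟩
        have := hmle j hj
        omega
      · rintro ⟨hjm, hj, hj1⟩
        exact ⟨⟨hj, hjm⟩, fun h => hj1 h.1⟩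
    have keyCongr : ∀ a ∈ (leftEnds s).erase m, blockEnd s a = blockEnd s' a := by
      intro a ha
      have ham := ne_of_mem_erase ha
      obtain ⟨has, ha1⟩ := mem_leftEnds.1 (mem_of_mem_erase ha)
      have has' : a ∈ s' := (hs'iff _).2 ⟨has, ham⟩
      have hs'ne : s'.Nonempty := ⟨a, has'⟩
      set r := s'.max' hs'ne with hr
      have hrs' : r ∈ s' := s'.max'_mem hs'ne
      obtain ⟨hrs, hrm⟩ := (hs'iff _).1 hrs'
      have hrm1 : r ≠ m - 1 := fun h => hprev (h ▸ hrs)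
      have hrle := hmle r hrs
      have har : a ≤ r := s'.le_max' a has'
      have hr1 : r + 1 ∉ s' := fun h => by have := s'.le_max' _ h; omega
      refine blockEnd_erase hs ⟨r, mem_rightEnds.2 ⟨hrs', hr1⟩, har, by omega⟩
    have hBm : blockEnd s m = m := blockEnd_eq hmr (le_refl m) (fun r _ h => h)
    have eU : (∑ a ∈ leftEnds s, if (a + blockEnd s a) % 2 = 1 then (-1:ℤ)^a else 0)
        = ∑ a ∈ leftEnds s', if (a + blockEnd s' a) % 2 = 1 then (-1:ℤ)^a else 0 := by
      rw [← Finset.add_sum_erase _ _ hmL, hBm, if_neg (by omega), zero_add, hL]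
      refine Finset.sum_congr rfl (fun a ha => ?_)
      rw [keyCongr a ha]
    rw [eU, IH, hpairs]


lemma e_apply (k j : ℕ) : e k j = if k = j then 1 else 0 := by
  rw [e, Finsupp.single_apply]

lemma Tval {i : ℕ} (hi : 1 ≤ i) (v : Vec) (j : ℕ) :
    Tlin i v j = if j + 1 < i then v j else if j ≤ i + 1 then v (i-1) else v (j-2) := by
  rw [Tlin, Finsupp.linearCombination_apply, Finsupp.sum_apply, Finsupp.sum]
  have hsum : ∀ (t : ℕ), (∑ k ∈ v.support, if k = t then v t else 0) = v t := by
    intro t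
    rw [Finset.sum_ite_eq' v.support t (fun _ => v t)]
    split_ifs with h
    · rfl
    · exact (Finsupp.notMem_support_iff.1 h).symm
  by_cases hc1 : j + 1 < i
  · rw [if_pos hc1]
    rw [show (∑ k ∈ v.support, (v k • Tfun i k) j) = ∑ k ∈ v.support, if k = j then v j else 0 from
      Finset.sum_congr rfl (fun k _ => ?_), hsum]
    rw [Finsupp.smul_apply, smul_eq_mul]
    by_cases hkj : k = j
    · subst hkj
      rw [Tfun, if_pos hc1, e_apply, if_pos rfl, mul_one, if_pos rfl]
    · rw [Tfun]
      split_ifs with h2 h3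
      · rw [e_apply, if_neg hkj, mul_zero]
      · rw [Finsupp.add_apply, Finsupp.add_apply, e_apply, e_apply, e_apply,
          if_neg (by omega), if_neg (by omega), if_neg (by omega)]
        ring
      · rw [e_apply, if_neg (by omega), mul_zero]
  · rw [if_neg hc1]
    by_cases hc2 : j ≤ i + 1
    · rw [if_pos hc2]
      rw [show (∑ k ∈ v.support, (v k • Tfun i k) j) = ∑ k ∈ v.support,
          if k = i - 1 then v (i-1) else 0 from Finset.sum_congr rfl (fun k _ => ?_), hsum]
      rw [Finsupp.smul_apply, smul_eq_mul]
      by_cases hkj : k = i - 1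
      · subst hkj
        rw [Tfun, if_neg (by omega), if_pos (by omega)]
        rw [Finsupp.add_apply, Finsupp.add_apply, e_apply, e_apply, e_apply]
        have hj3 : j = i - 1 ∨ j = i ∨ j = i + 1 := by omega
        rcases hj3 with rfl | rfl | rfl
        · rw [if_pos rfl, if_neg (by omega), if_neg (by omega)]
          simp
        · rw [if_neg (by omega), if_pos (by omega), if_neg (by omega)]
          simp
        · rw [if_neg (by omega), if_neg (by omega), if_pos (by omega)]
          simp
      · rw [Tfun]
        split_ifs with h2 h3
        · rw [e_apply, if_neg (by omega), mul_zero]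
        · exact absurd (by omega) hkj
        · rw [e_apply, if_neg (by omega), mul_zero]
    · rw [if_neg hc2]
      rw [show (∑ k ∈ v.support, (v k • Tfun i k) j) = ∑ k ∈ v.support,
          if k = j - 2 then v (j-2) else 0 from Finset.sum_congr rfl (fun k _ => ?_), hsum]
      rw [Finsupp.smul_apply, smul_eq_mul]
      by_cases hkj : k = j - 2
      · subst hkj
        rw [Tfun, if_neg (by omega), if_neg (by omega), e_apply, if_pos (by omega), mul_one, if_pos rfl]
      · rw [Tfun]
        split_ifs with h2 h3
        · rw [e_apply, if_neg (by omega), mul_zero]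
        · rw [Finsupp.add_apply, Finsupp.add_apply, e_apply, e_apply, e_apply,
            if_neg (by omega), if_neg (by omega), if_neg (by omega)]
          ring
        · rw [e_apply, if_neg (by omega), mul_zero]

lemma VD_support {n : ℕ} {v : Vec} (hv : v ∈ VD n) : ∀ j, j ∉ Set.Icc 1 n → v j = 0 := by
  have hle : VD n ≤ Finsupp.supported (ZMod 2) (ZMod 2) (Set.Icc 1 n) := by
    rw [VD]
    refine Submodule.span_le.2 ?_
    rintro _ ⟨j, hj, rfl⟩
    exact Finsupp.single_mem_supported _ 1 hj
  exact (Finsupp.mem_supported' _ _).1 (hle hv)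

lemma lemR (x : Vec) (N : ℕ) (hN : ∀ j, N ≤ j → x j = 0) :
    (∑ j ∈ x.support.filter (fun j => j + 1 ∈ x.support), (-1:ℤ)^j)
      = ∑ j ∈ Finset.range N, (if x j ≠ 0 ∧ x (j+1) ≠ 0 then (-1:ℤ)^j else 0) := by
  rw [Finset.sum_filter]
  have h1 : (∑ j ∈ x.support, if j + 1 ∈ x.support then (-1:ℤ)^j else 0)
      = ∑ j ∈ x.support, (if x j ≠ 0 ∧ x (j+1) ≠ 0 then (-1:ℤ)^j else 0) := by
    refine Finset.sum_congr rfl (fun j hj => ?_)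
    have hj0 : x j ≠ 0 := Finsupp.mem_support_iff.1 hj
    by_cases h : x (j+1) ≠ 0
    · rw [if_pos (Finsupp.mem_support_iff.2 h), if_pos ⟨hj0, h⟩]
    · rw [if_neg (fun hc => h (Finsupp.mem_support_iff.1 hc)), if_neg (fun hc => h hc.2)]
  rw [h1]
  refine Finset.sum_subset ?_ ?_
  · intro j hj
    rw [Finset.mem_range]
    by_contra h
    exact Finsupp.mem_support_iff.1 hj (hN j (by omega))
  · intro j _ hj
    rw [if_neg]
    rintro ⟨h1, _⟩
    exact h1 (Finsupp.notMem_support_iff.1 hj)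

/-- for even `D ≥ 2`, `i ∈ [1,D]`, `c ∈ 𝔽_2` and `v' ∈ V_{D-2}`,
`u(T_i(v') + c e_i) = u(v')`. -/
theorem stmt19 (D i : ℕ) (hD : Even D) (h2 : 2 ≤ D) (h1 : 1 ≤ i) (hi : i ≤ D)
    (c : ZMod 2) (v' : Vec) (hv : v' ∈ VD (D - 2)) :
    uInv (Tlin i v' + c • e i) = uInv v' := by
  classical
  obtain ⟨i0, rfl⟩ : ∃ i0, i = i0 + 1 := ⟨i - 1, by omega⟩
  have hsupp : ∀ j, v' j ≠ 0 → 1 ≤ j ∧ j ≤ D - 2 := by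
    intro j hj
    by_contra h
    refine hj (VD_support hv j ?_)
    rw [Set.mem_Icc]
    omega
  set x := Tlin (i0+1) v' + c • e (i0+1) with hxdef
  have hX : ∀ j, x j = (if j + 1 < i0 + 1 then v' j else if j ≤ i0 + 2 then v' i0 else v' (j-2))
      + (if i0 + 1 = j then c else 0) := by
    intro j
    rw [hxdef, Finsupp.add_apply, Finsupp.smul_apply, Tval (by omega) v' j, e_apply]
    have h1 : i0 + 1 - 1 = i0 := by omega
    rw [h1]
    congr 1
    split_ifs <;> simp [smul_eq_mul]
  have hv0 : v' 0 = 0 := by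
    by_contra h
    have := hsupp 0 h
    omega
  have hA : ∀ j, j ≤ i0 → x j = v' j := by
    intro j hj
    rw [hX j]
    rcases Nat.lt_or_ge (j+1) (i0+1) with h | h
    · rw [if_pos h, if_neg (by omega), add_zero]
    · have hji : j = i0 := by omega
      rw [if_neg (by omega), if_pos (by omega), if_neg (by omega), add_zero, hji]
  have hC : x (i0+1) = v' i0 + c := by
    rw [hX (i0+1), if_neg (by omega), if_pos (by omega), if_pos rfl]
  have hD : x (i0+2) = v' i0 := by
    rw [hX (i0+2), if_neg (by omega), if_pos (by omega), if_neg (by omega), add_zero]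
  have hE : ∀ j, i0 + 3 ≤ j → x j = v' (j-2) := by
    intro j hj
    rw [hX j, if_neg (by omega), if_neg (by omega), if_neg (by omega), add_zero]
  set N := D + i0 + 1 with hNdef
  have hvN : ∀ j, N ≤ j → v' j = 0 := by
    intro j hj
    by_contra h
    have := hsupp j h
    omega
  have hxN : ∀ j, N + 2 ≤ j → x j = 0 := by
    intro j hj
    rw [hE j (by omega)]
    exact hvN (j-2) (by omega)
  have hx0 : (0:ℕ) ∉ x.support := by
    rw [Finsupp.notMem_support_iff, hA 0 (by omega)]
    exact hv0
  have hv's : (0:ℕ) ∉ v'.support := by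
    rw [Finsupp.notMem_support_iff]
    exact hv0
  show uInv x = uInv v'
  rw [uInv, uInv, lemA _ hx0, lemA _ hv's, lemR x (N+2) hxN, lemR v' N hvN]
  -- now a concrete computation with sums over ranges
  simp only [Finset.range_eq_Ico]
  rw [← Finset.sum_Ico_consecutive _ (show 0 ≤ i0 + 3 by omega) (show i0 + 3 ≤ N + 2 by omega),
      ← Finset.sum_Ico_consecutive _ (show 0 ≤ i0 by omega) (show i0 ≤ i0 + 3 by omega)]
  rw [← Finset.sum_Ico_consecutive _ (show 0 ≤ i0 + 1 by omega) (show i0 + 1 ≤ N by omega),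
      ← Finset.sum_Ico_consecutive _ (show 0 ≤ i0 by omega) (show i0 ≤ i0 + 1 by omega)]
  have hhead : (∑ j ∈ Finset.Ico 0 i0, if x j ≠ 0 ∧ x (j+1) ≠ 0 then (-1:ℤ)^j else 0)
      = ∑ j ∈ Finset.Ico 0 i0, (if v' j ≠ 0 ∧ v' (j+1) ≠ 0 then (-1:ℤ)^j else 0) := by
    refine Finset.sum_congr rfl (fun j hj => ?_)
    rw [Finset.mem_Ico] at hj
    rw [hA j (by omega), hA (j+1) (by omega)]
  have htail : (∑ j ∈ Finset.Ico (i0+3) (N+2), if x j ≠ 0 ∧ x (j+1) ≠ 0 then (-1:ℤ)^j else 0)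
      = ∑ j ∈ Finset.Ico (i0+1) N, (if v' j ≠ 0 ∧ v' (j+1) ≠ 0 then (-1:ℤ)^j else 0) := by
    rw [Finset.sum_Ico_eq_sum_range, Finset.sum_Ico_eq_sum_range]
    have hw : N + 2 - (i0 + 3) = N - (i0 + 1) := by omega
    rw [hw]
    refine Finset.sum_congr rfl (fun j _ => ?_)
    have e1 : x (i0 + 3 + j) = v' (i0 + 1 + j) := by
      rw [hE (i0+3+j) (by omega)]
      congr 1
      omega
    have e2 : x (i0 + 3 + j + 1) = v' (i0 + 1 + j + 1) := by
      rw [hE (i0+3+j+1) (by omega)]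
      congr 1
      omega
    rw [e1, e2]
    congr 1
    rw [show i0 + 3 + j = (i0 + 1 + j) + 2 by omega, pow_add]
    norm_num
  have hmid : (∑ j ∈ Finset.Ico i0 (i0+3), if x j ≠ 0 ∧ x (j+1) ≠ 0 then (-1:ℤ)^j else 0)
      = ∑ j ∈ Finset.Ico i0 (i0+1), (if v' j ≠ 0 ∧ v' (j+1) ≠ 0 then (-1:ℤ)^j else 0) := by
    rw [Finset.sum_Ico_eq_sum_range, Finset.sum_Ico_eq_sum_range]
    rw [show i0 + 3 - i0 = 3 by omega, show i0 + 1 - i0 = 1 by omega]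
    rw [Finset.sum_range_succ, Finset.sum_range_succ, Finset.sum_range_one, Finset.sum_range_one]
    rw [show i0 + 0 = i0 by omega, show i0 + 1 + 1 = i0 + 2 by omega, show i0 + 2 + 1 = i0 + 3 by omega]
    rw [hA i0 (by omega), hC, hD, hE (i0+3) (by omega), show i0 + 3 - 2 = i0 + 1 by omega]
    have hcancel : (if v' i0 ≠ 0 ∧ v' i0 + c ≠ 0 then (-1:ℤ)^i0 else 0)
        + (if v' i0 + c ≠ 0 ∧ v' i0 ≠ 0 then (-1:ℤ)^(i0+1) else 0) = 0 := by
      by_cases hp : v' i0 ≠ 0 ∧ v' i0 + c ≠ 0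
      · rw [if_pos hp, if_pos ⟨hp.2, hp.1⟩, pow_succ]
        ring
      · rw [if_neg hp, if_neg (fun h => hp ⟨h.2, h.1⟩), add_zero]
    rw [hcancel, zero_add]
    congr 1
    rw [show i0 + 2 = i0 + 2 by rfl, pow_add]
    norm_num
  rw [hhead, htail, hmid]
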